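/- Let d ≥ 2, 0 < ξ ≤ 1, ϑ ∈ [1, d], and let k ∈ {1,...,d-1} be such that d/(k+1) ≤ ϑ < d/k (for ϑ = 1 take k = d-1 with d/(k+1) ≤ ϑ ≤ d/k). Write ϑ = λ·(d/k) + (1-λ)·(d/(k+1)) with λ = (ϑ/d - 1/(k+1))/(1/k - 1/(k+1)) ∈ [0,1]. Define the discrete measure H placing, uniformly over all subsets K ⊆ {1,...,d} with |K| = k, mass (λd/k)·C(d,k)^{-1}·k at the point |K|^{-1}·𝟙_K ∈ S₊, and over all subsets with |K| = k+1, mass ((1-λ)d/(k+1))·C(d,k+1)^{-1}·(k+1) at |K|^{-1}·𝟙_K. Then H satisfies ∫ u_j dH = 1 for each j and ∫ max_{j∈{1,...,d}} u_j dH = ϑ. -/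

import Mathlib

open MeasureTheory Finset

lemma integrable_dirac'' {α E : Type*} [MeasurableSpace α] [MeasurableSingletonClass α]
    [NormedAddCommGroup E] {f : α → E} (hf : StronglyMeasurable f) (a : α) :
    Integrable f (Measure.dirac a) :=
  ⟨hf.aestronglyMeasurable, by
    rw [HasFiniteIntegral, lintegral_dirac]; exact ENNReal.coe_lt_top⟩

lemma integral_sum_ofReal_dirac {α : Type*} [MeasurableSpace α] [MeasurableSingletonClass α]
    {ι : Type*} (s : Finset ι) (c : ι → ℝ) (hc : ∀ i ∈ s, 0 ≤ c i) (x : ι → α)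
    (f : α → ℝ) (hf : StronglyMeasurable f) :
    ∫ u, f u ∂(∑ i ∈ s, ENNReal.ofReal (c i) • Measure.dirac (x i))
      = ∑ i ∈ s, c i * f (x i) := by
  rw [integral_finset_sum_measure (fun i _ =>
    (integrable_dirac'' hf (x i)).smul_measure ENNReal.ofReal_ne_top)]
  refine Finset.sum_congr rfl fun i hi => ?_
  rw [integral_smul_measure, integral_dirac, smul_eq_mul, ENNReal.toReal_ofReal (hc i hi)]

lemma card_filter_mem_powersetCard (d k : ℕ) (hk : 1 ≤ k) (j : Fin d) :
    (((powersetCard k (univ : Finset (Fin d)))).filter (fun K => j ∈ K)).card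
      = (d - 1).choose (k - 1) := by
  have h := Finset.card_bij' (s := ((powersetCard k (univ : Finset (Fin d)))).filter (fun K => j ∈ K))
    (t := powersetCard (k-1) ((univ : Finset (Fin d)).erase j))
    (i := fun K _ => K.erase j) (j := fun L _ => insert j L)
    (hi := ?_) (hj := ?_) (left_inv := ?_) (right_inv := ?_)
  · rw [h, card_powersetCard, card_erase_of_mem (mem_univ j), card_univ, Fintype.card_fin]
  · intro K hK
    simp only [mem_filter, mem_powersetCard] at hK
    rw [mem_powersetCard]
    exact ⟨erase_subset_erase j hK.1.1, by rw [card_erase_of_mem hK.2, hK.1.2]⟩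
  · intro L hL
    rw [mem_powersetCard] at hL
    have hjL : j ∉ L := fun h => (mem_erase.mp (hL.1 h)).1 rfl
    simp only [mem_filter, mem_powersetCard]
    refine ⟨⟨subset_univ _, ?_⟩, mem_insert_self j L⟩
    rw [card_insert_of_notMem hjL, hL.2]; omega
  · intro K hK
    simp only [mem_filter] at hK
    exact insert_erase hK.2
  · intro L hL
    rw [mem_powersetCard] at hL
    exact erase_insert (fun h => (mem_erase.mp (hL.1 h)).1 rfl)

theorem tawn_molchanov_dual_feasibility (d : ℕ) (hd : 2 ≤ d)
    (ξ : ℝ) (hξ0 : 0 < ξ) (hξ1 : ξ ≤ 1)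
    (ϑ : ℝ) (hϑ : ϑ ∈ Set.Icc (1 : ℝ) d)
    (k : ℕ) (hk1 : 1 ≤ k) (hkd : k ≤ d - 1)
    (hlow : (d : ℝ) / (k + 1) ≤ ϑ) (hupp : ϑ ≤ (d : ℝ) / k)
    (lam : ℝ) (hlam : lam = (ϑ / d - 1 / ((k : ℝ) + 1)) / (1 / (k : ℝ) - 1 / ((k : ℝ) + 1)))
    (H : Measure (Fin d → ℝ))
    (hH : H =
      (∑ K ∈ Finset.univ.powerset.filter (fun K : Finset (Fin d) => K.card = k),
        ENNReal.ofReal ((lam * d / k) * ((Nat.choose d k : ℝ))⁻¹ * k) •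
          Measure.dirac (fun j : Fin d => if j ∈ K then ((K.card : ℝ))⁻¹ else 0))
      + (∑ K ∈ Finset.univ.powerset.filter (fun K : Finset (Fin d) => K.card = k + 1),
        ENNReal.ofReal (((1 - lam) * d / (k + 1)) * ((Nat.choose d (k + 1) : ℝ))⁻¹ * (k + 1)) •
          Measure.dirac (fun j : Fin d => if j ∈ K then ((K.card : ℝ))⁻¹ else 0))) :
    (∀ j : Fin d, ∫ u, u j ∂H = 1) ∧ ∫ u, (⨆ j, u j) ∂H = ϑ := by
  have hkd' : k < d := by omega
  have hd0 : (0:ℝ) < d := by positivity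
  have hk0 : (0:ℝ) < k := by exact_mod_cast hk1
  have hk10 : (0:ℝ) < (k:ℝ) + 1 := by positivity
  have hden : (0:ℝ) < 1 / (k:ℝ) - 1 / ((k:ℝ) + 1) := by
    rw [sub_pos, div_lt_div_iff₀ hk10 hk0]; nlinarith
  have hlam0 : 0 ≤ lam := by
    rw [hlam]
    apply div_nonneg _ hden.le
    rw [sub_nonneg, div_le_div_iff₀ hk10 hd0]
    have := (div_le_iff₀ hk10).mp hlow
    nlinarith
  have hlam1 : lam ≤ 1 := by
    rw [hlam, div_le_one hden]
    have h1 : ϑ * k ≤ d := (le_div_iff₀ hk0).mp hupp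
    have h2 : ϑ / d ≤ 1 / k := by
      rw [div_le_div_iff₀ hd0 hk0]; linarith
    linarith
  set c1 : ℝ := (lam * d / k) * ((Nat.choose d k : ℝ))⁻¹ * k with hc1
  set c2 : ℝ := ((1 - lam) * d / (k + 1)) * ((Nat.choose d (k + 1) : ℝ))⁻¹ * (k + 1) with hc2
  have hch1 : (0:ℝ) < (Nat.choose d k : ℝ) := by
    exact_mod_cast Nat.choose_pos hkd'.le
  have hch2 : (0:ℝ) < (Nat.choose d (k+1) : ℝ) := by
    exact_mod_cast Nat.choose_pos (by omega : k + 1 ≤ d)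
  have hc1nn : 0 ≤ c1 := by
    apply mul_nonneg (mul_nonneg (by positivity) (by positivity)) hk0.le
  have hc2nn : 0 ≤ c2 := by
    have : 0 ≤ 1 - lam := by linarith
    positivity
  have hps : ∀ m : ℕ, Finset.univ.powerset.filter (fun K : Finset (Fin d) => K.card = m)
      = powersetCard m (univ : Finset (Fin d)) := fun m => (powersetCard_eq_filter).symm
  have hid1 : (d:ℝ) * ((d-1).choose (k-1) : ℝ) = (Nat.choose d k : ℝ) * k := by
    have := Nat.add_one_mul_choose_eq (d-1) (k-1)
    have h1 : d - 1 + 1 = d := by omega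
    have h2 : k - 1 + 1 = k := by omega
    rw [h1, h2] at this
    exact_mod_cast this
  have hid2 : (d:ℝ) * ((d-1).choose k : ℝ) = (Nat.choose d (k+1) : ℝ) * ((k:ℝ)+1) := by
    have := Nat.add_one_mul_choose_eq (d-1) k
    have h1 : d - 1 + 1 = d := by omega
    rw [h1] at this
    exact_mod_cast this
  have hkey : lam * (1 / (k:ℝ) - 1 / ((k:ℝ) + 1)) = ϑ / d - 1 / ((k:ℝ) + 1) := by
    rw [hlam, div_mul_cancel₀ _ hden.ne']
  constructor
  · intro j
    have hmeas : StronglyMeasurable (fun u : Fin d → ℝ => u j) :=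
      (measurable_pi_apply j).stronglyMeasurable
    rw [hH, integral_add_measure
      (integrable_finset_sum_measure.mpr fun K _ =>
        (integrable_dirac'' hmeas _).smul_measure ENNReal.ofReal_ne_top)
      (integrable_finset_sum_measure.mpr fun K _ =>
        (integrable_dirac'' hmeas _).smul_measure ENNReal.ofReal_ne_top),
      integral_sum_ofReal_dirac _ _ (fun _ _ => hc1nn) _ _ hmeas,
      integral_sum_ofReal_dirac _ _ (fun _ _ => hc2nn) _ _ hmeas,
      hps, hps]
    have hsum : ∀ (m : ℕ), 1 ≤ m → ∀ c : ℝ,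
        (∑ K ∈ powersetCard m (univ : Finset (Fin d)),
          c * (if j ∈ K then ((K.card : ℝ))⁻¹ else 0))
        = ((d-1).choose (m-1) : ℝ) * (c * (m:ℝ)⁻¹) := by
      intro m hm c
      have : ∀ K ∈ powersetCard m (univ : Finset (Fin d)),
          c * (if j ∈ K then ((K.card : ℝ))⁻¹ else 0)
          = if j ∈ K then c * (m:ℝ)⁻¹ else 0 := by
        intro K hK
        rw [mem_powersetCard] at hK
        rw [hK.2]
        split <;> simp
      rw [Finset.sum_congr rfl this, ← Finset.sum_filter, Finset.sum_const,
        card_filter_mem_powersetCard d m hm j, nsmul_eq_mul]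
    rw [hsum k hk1 c1, hsum (k+1) (by omega) c2]
    have e1 : ((d-1).choose (k-1) : ℝ) * (c1 * (k:ℝ)⁻¹) = lam := by
      rw [hc1]
      field_simp
      linear_combination lam * hid1
    have e2 : ((d-1).choose (k+1-1) : ℝ) * (c2 * ((k+1 : ℕ):ℝ)⁻¹) = 1 - lam := by
      have hk' : k + 1 - 1 = k := by omega
      rw [hk', hc2]
      push_cast
      field_simp
      linear_combination (1 - lam) * hid2
    rw [e1, e2]; ring
  · have : Nonempty (Fin d) := ⟨⟨0, by omega⟩⟩
    have hmeas : StronglyMeasurable (fun u : Fin d → ℝ => ⨆ j, u j) :=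
      (Measurable.iSup (fun j => measurable_pi_apply j)).stronglyMeasurable
    rw [hH, integral_add_measure
      (integrable_finset_sum_measure.mpr fun K _ =>
        (integrable_dirac'' hmeas _).smul_measure ENNReal.ofReal_ne_top)
      (integrable_finset_sum_measure.mpr fun K _ =>
        (integrable_dirac'' hmeas _).smul_measure ENNReal.ofReal_ne_top),
      integral_sum_ofReal_dirac _ _ (fun _ _ => hc1nn) _ _ hmeas,
      integral_sum_ofReal_dirac _ _ (fun _ _ => hc2nn) _ _ hmeas,
      hps, hps]
    have hsup : ∀ (m : ℕ), 1 ≤ m → ∀ c : ℝ,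
        (∑ K ∈ powersetCard m (univ : Finset (Fin d)),
          c * (⨆ j, (if j ∈ K then ((K.card : ℝ))⁻¹ else 0)))
        = (d.choose m : ℝ) * (c * (m:ℝ)⁻¹) := by
      intro m hm c
      have : ∀ K ∈ powersetCard m (univ : Finset (Fin d)),
          c * (⨆ j, (if j ∈ K then ((K.card : ℝ))⁻¹ else 0)) = c * (m:ℝ)⁻¹ := by
        intro K hK
        rw [mem_powersetCard] at hK
        congr 1
        have hKne : K.Nonempty := card_pos.mp (by omega)
        obtain ⟨j0, hj0⟩ := hKne
        apply le_antisymm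
        · apply ciSup_le
          intro j
          split
          · rw [hK.2]
          · positivity
        · have := le_ciSup (f := fun j => (if j ∈ K then ((K.card : ℝ))⁻¹ else 0))
            (Set.Finite.bddAbove (Set.finite_range _)) j0
          simpa [hj0, hK.2] using this
      rw [Finset.sum_congr rfl this, Finset.sum_const, card_powersetCard, card_univ,
        Fintype.card_fin, nsmul_eq_mul]
    rw [hsup k hk1 c1, hsup (k+1) (by omega) c2]
    have h1 : (d.choose k : ℝ) * (c1 * (k:ℝ)⁻¹) = lam * ((d:ℝ)/k) := by
      rw [hc1]; field_simp
    have h2 : (d.choose (k+1) : ℝ) * (c2 * ((k+1:ℕ):ℝ)⁻¹) = (1-lam) * ((d:ℝ)/((k:ℝ)+1)) := by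
      rw [hc2]; push_cast; field_simp
    push_cast
    push_cast at h1 h2
    rw [h1, h2]
    rw [hlam]
    field_simp
    ring
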